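/- Let d(s) = exp(sG_d) for s ∈ ℝ be a linear dilation in ℝ^n (G_d ∈ ℝ^{n×n} anti-Hurwitz, with ‖d(s)x‖ → ∞ as s → +∞ and ‖d(s)x‖ → 0 as s → −∞ for every x ≠ 0), and let f : ℝ^n → ℝ^n be a continuous d-homogeneous vector field of degree μ, i.e. f(d(s)x) = e^{μs}·d(s)·f(x) for all s ∈ ℝ and x ∈ ℝ^n. If the system ẋ = f(x) is globally uniformly asymptotically stable, then: (i) if μ < 0, it is globally uniformly finite-time stable, i.e. it is Lyapunov stable and there exists a locally bounded settling-time function T : ℝ^n → ℝ such that every solution with x(0) = x₀ satisfies x(t) = 0 for all t ≥ T(x₀); (ii) if μ > 0, it is globally uniformly nearly fixed-time stable, i.e. it is Lyapunov stable and for every r > 0 there exists T_r > 0, independent of x₀, such that every solution satisfies ‖x(t)‖ < r for all t ≥ T_r. -/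

import Mathlib

/-
Statement 13 (Lemma 2): for a d-homogeneous vector field of degree μ, global
uniform asymptotic stability implies global uniform finite-time stability when
μ < 0 and global uniform nearly fixed-time stability when μ > 0.
-/

open Matrix Filter

/-- The Euclidean norm of a finitely-indexed real vector. -/
noncomputable def euclNorm {ι : Type*} [Fintype ι] (x : ι → ℝ) : ℝ :=
  Real.sqrt (x ⬝ᵥ x)

/-- A (forward) solution of ẋ = f(x). -/
def IsSol {n : ℕ} (f : (Fin n → ℝ) → (Fin n → ℝ)) (x : ℝ → Fin n → ℝ) : Prop :=
  ∀ t : ℝ, 0 ≤ t → HasDerivAt x (f (x t)) t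

lemma euclNorm_eq {n : ℕ} (x : Fin n → ℝ) : euclNorm x = ‖(WithLp.equiv 2 (Fin n → ℝ)).symm x‖ := by
  rw [EuclideanSpace.norm_eq, euclNorm, dotProduct]
  congr 1
  refine Finset.sum_congr rfl fun i _ => ?_
  simp only [Real.norm_eq_abs, sq_abs, WithLp.equiv_symm_apply, WithLp.ofLp_toLp]
  ring

lemma euclNorm_nonneg {n : ℕ} (x : Fin n → ℝ) : 0 ≤ euclNorm x := Real.sqrt_nonneg _

lemma euclNorm_zero {n : ℕ} : euclNorm (0 : Fin n → ℝ) = 0 := by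
  rw [euclNorm_eq]; simp

lemma euclNorm_add_le {n : ℕ} (x y : Fin n → ℝ) :
    euclNorm (x + y) ≤ euclNorm x + euclNorm y := by
  simp only [euclNorm_eq]
  rw [show (WithLp.equiv 2 (Fin n → ℝ)).symm (x + y)
      = (WithLp.equiv 2 (Fin n → ℝ)).symm x + (WithLp.equiv 2 (Fin n → ℝ)).symm y from rfl]
  exact norm_add_le _ _

lemma euclNorm_smul {n : ℕ} (a : ℝ) (x : Fin n → ℝ) :
    euclNorm (a • x) = |a| * euclNorm x := by
  simp only [euclNorm_eq]
  rw [show (WithLp.equiv 2 (Fin n → ℝ)).symm (a • x)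
      = a • (WithLp.equiv 2 (Fin n → ℝ)).symm x from rfl]
  rw [norm_smul, Real.norm_eq_abs]

lemma euclNorm_sum_le {n : ℕ} {ι : Type*} (s : Finset ι) (g : ι → Fin n → ℝ) :
    euclNorm (∑ j ∈ s, g j) ≤ ∑ j ∈ s, euclNorm (g j) := by
  classical
  induction s using Finset.induction with
  | empty => simp [euclNorm_zero]
  | insert _ _ hj ih =>
      rw [Finset.sum_insert hj, Finset.sum_insert hj]
      exact le_trans (euclNorm_add_le _ _) (by linarith)

lemma abs_le_euclNorm {n : ℕ} (v : Fin n → ℝ) (j : Fin n) : |v j| ≤ euclNorm v := by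
  rw [euclNorm, dotProduct, ← Real.sqrt_mul_self_eq_abs]
  exact Real.sqrt_le_sqrt (Finset.single_le_sum (fun i _ => mul_self_nonneg (v i)) (Finset.mem_univ j))

lemma euclNorm_mulVec_le {n : ℕ} (A : Matrix (Fin n) (Fin n) ℝ) (v : Fin n → ℝ) :
    euclNorm (A.mulVec v) ≤ ‖Matrix.toEuclideanCLM (𝕜 := ℝ) A‖ * euclNorm v := by
  rw [euclNorm_eq, euclNorm_eq]
  calc ‖(WithLp.equiv 2 (Fin n → ℝ)).symm (A.mulVec v)‖
      = ‖Matrix.toEuclideanCLM (𝕜 := ℝ) A ((WithLp.equiv 2 (Fin n → ℝ)).symm v)‖ := by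
        rfl
    _ ≤ _ := ContinuousLinearMap.le_opNorm _ _

lemma continuous_euclNorm {n : ℕ} : Continuous (euclNorm : (Fin n → ℝ) → ℝ) := by
  unfold euclNorm dotProduct
  exact Real.continuous_sqrt.comp (continuous_finset_sum _ fun i _ =>
    (continuous_apply i).mul (continuous_apply i))

lemma continuous_mulVec_const {n : ℕ} (w : Fin n → ℝ) :
    Continuous fun A : Matrix (Fin n) (Fin n) ℝ => A.mulVec w := by
  refine continuous_pi fun i => ?_
  unfold Matrix.mulVec dotProduct
  exact continuous_finset_sum _ fun j _ =>
    by fun_prop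

lemma mulVec_eq_sum_single {n : ℕ} (A : Matrix (Fin n) (Fin n) ℝ) (v : Fin n → ℝ) :
    A.mulVec v = ∑ j, v j • A.mulVec (Pi.single j 1) := by
  have h1 : v = ∑ j, v j • (Pi.single j 1 : Fin n → ℝ) := by
    funext i
    rw [Finset.sum_apply]
    simp [Pi.single_apply, Finset.sum_ite_eq, mul_comm]
  calc A.mulVec v = A.mulVec (∑ j, v j • (Pi.single j 1 : Fin n → ℝ)) := by rw [← h1]
    _ = ∑ j, v j • A.mulVec (Pi.single j 1) := by
        rw [show (A *ᵥ ∑ j, v j • (Pi.single j 1 : Fin n → ℝ))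
            = A.mulVecLin (∑ j, v j • (Pi.single j 1 : Fin n → ℝ)) from rfl, map_sum]
        exact Finset.sum_congr rfl fun j _ => by
          rw [LinearMap.map_smul]; rfl


lemma dl_mul {n : ℕ} (Gd : Matrix (Fin n) (Fin n) ℝ) (s t : ℝ) :
    NormedSpace.exp (s • Gd) * NormedSpace.exp (t • Gd) = NormedSpace.exp ((s+t) • Gd) := by
  rw [add_smul, Matrix.exp_add_of_commute]
  exact (Commute.refl Gd).smul_left _ |>.smul_right _

lemma dl_zero {n : ℕ} (Gd : Matrix (Fin n) (Fin n) ℝ) :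
    NormedSpace.exp ((0:ℝ) • Gd) = 1 := by
  rw [zero_smul, NormedSpace.exp_zero]

lemma dl_comp {n : ℕ} (Gd : Matrix (Fin n) (Fin n) ℝ) (s t : ℝ) (v : Fin n → ℝ) :
    (NormedSpace.exp (s • Gd)).mulVec ((NormedSpace.exp (t • Gd)).mulVec v)
      = (NormedSpace.exp ((s+t) • Gd)).mulVec v := by
  rw [Matrix.mulVec_mulVec, dl_mul]

lemma dl_cancel {n : ℕ} (Gd : Matrix (Fin n) (Fin n) ℝ) (s : ℝ) (v : Fin n → ℝ) :
    (NormedSpace.exp (s • Gd)).mulVec ((NormedSpace.exp ((-s) • Gd)).mulVec v) = v := by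
  rw [dl_comp, add_neg_cancel, dl_zero, Matrix.one_mulVec]

lemma dl_continuous {n : ℕ} (Gd : Matrix (Fin n) (Fin n) ℝ) :
    Continuous fun s : ℝ => NormedSpace.exp (s • Gd) := by
  letI : SeminormedRing (Matrix (Fin n) (Fin n) ℝ) := Matrix.linftyOpSemiNormedRing
  letI : NormedRing (Matrix (Fin n) (Fin n) ℝ) := Matrix.linftyOpNormedRing
  letI : NormedAlgebra ℝ (Matrix (Fin n) (Fin n) ℝ) := Matrix.linftyOpNormedAlgebra
  letI : NormedAlgebra ℚ (Matrix (Fin n) (Fin n) ℝ) := Matrix.linftyOpNormedAlgebra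
  exact NormedSpace.exp_continuous.comp (continuous_id.smul continuous_const)

lemma unif_bound {n : ℕ} (Gd : Matrix (Fin n) (Fin n) ℝ)
    (hlimBot : ∀ x : Fin n → ℝ, x ≠ 0 →
      Tendsto (fun s : ℝ => euclNorm ((NormedSpace.exp (s • Gd)).mulVec x))
        atBot (nhds 0)) (c : ℝ) :
    ∃ M : ℝ, 1 ≤ M ∧ ∀ s ≤ c, ∀ v : Fin n → ℝ,
      euclNorm ((NormedSpace.exp (s • Gd)).mulVec v) ≤ M * euclNorm v := by
  have hCj : ∀ j : Fin n, ∃ C : ℝ, 0 ≤ C ∧ ∀ s ≤ c,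
      euclNorm ((NormedSpace.exp (s • Gd)).mulVec (Pi.single j 1)) ≤ C := by
    intro j
    set φ : ℝ → ℝ := fun s => euclNorm ((NormedSpace.exp (s • Gd)).mulVec (Pi.single j 1)) with hφ
    have hne : (Pi.single j 1 : Fin n → ℝ) ≠ 0 := by
      intro h
      have := congrFun h j
      simp at this
    have hcont : Continuous φ :=
      continuous_euclNorm.comp ((continuous_mulVec_const _).comp (dl_continuous Gd))
    have htend := hlimBot _ hne
    have hev : ∀ᶠ s in atBot, φ s < 1 := htend.eventually_lt_const one_pos
    obtain ⟨b, hb⟩ := eventually_atBot.mp hev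
    by_cases hbc : b ≤ c
    · obtain ⟨C, hC⟩ := (isCompact_Icc (a := b) (b := c)).bddAbove_image
        (hcont.continuousOn)
      refine ⟨max 1 C, le_trans zero_le_one (le_max_left _ _), fun s hs => ?_⟩
      rcases le_or_gt s b with h | h
      · exact le_trans (hb s h).le (le_max_left _ _)
      · exact le_trans (hC ⟨s, ⟨h.le, hs⟩, rfl⟩) (le_max_right _ _)
    · refine ⟨1, zero_le_one, fun s hs => (hb s ?_).le⟩
      linarith
  choose C hC0 hCle using hCj
  refine ⟨max 1 (∑ j, C j), le_max_left _ _, fun s hs v => ?_⟩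
  calc euclNorm ((NormedSpace.exp (s • Gd)).mulVec v)
      = euclNorm (∑ j, v j • (NormedSpace.exp (s • Gd)).mulVec (Pi.single j 1)) := by
        rw [← mulVec_eq_sum_single]
    _ ≤ ∑ j, euclNorm (v j • (NormedSpace.exp (s • Gd)).mulVec (Pi.single j 1)) :=
        euclNorm_sum_le _ _
    _ ≤ ∑ j, euclNorm v * C j := by
        refine Finset.sum_le_sum fun j _ => ?_
        rw [euclNorm_smul]
        exact mul_le_mul (abs_le_euclNorm v j) (hCle j s hs) (euclNorm_nonneg _)
          (euclNorm_nonneg _)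
    _ = (∑ j, C j) * euclNorm v := by rw [← Finset.mul_sum, mul_comm]
    _ ≤ max 1 (∑ j, C j) * euclNorm v :=
        mul_le_mul_of_nonneg_right (le_max_right _ _) (euclNorm_nonneg _)

noncomputable def Hseq (Ts μ L : ℝ) : ℕ → ℝ → ℝ
  | 0, c => Real.exp (-(μ * c)) * Ts
  | (j+1), c => Real.exp (-(μ * (c + ((j:ℝ)+1) * L))) * Ts + Hseq Ts μ L j c

lemma Hseq_nonneg {Ts μ L : ℝ} (hTs : 0 ≤ Ts) (j : ℕ) (c : ℝ) : 0 ≤ Hseq Ts μ L j c := by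
  induction j with
  | zero => exact mul_nonneg (Real.exp_pos _).le hTs
  | succ j ih => exact add_nonneg (mul_nonneg (Real.exp_pos _).le hTs) ih

lemma Hseq_shift (Ts μ L : ℝ) (j : ℕ) (c a : ℝ) :
    Hseq Ts μ L j (c + a) = Real.exp (-(μ * a)) * Hseq Ts μ L j c := by
  induction j with
  | zero =>
      simp only [Hseq]
      rw [show -(μ * (c + a)) = -(μ * a) + -(μ * c) by ring, Real.exp_add]
      ring
  | succ j ih =>
      simp only [Hseq]
      rw [ih, show -(μ * (c + a + ((j:ℝ)+1) * L))
          = -(μ * a) + -(μ * (c + ((j:ℝ)+1) * L)) by ring, Real.exp_add]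
      ring

lemma Hseq_geom {Ts μ L : ℝ} (hTs : 0 ≤ Ts) (hq : Real.exp (-(μ * L)) < 1) (j : ℕ) :
    Hseq Ts μ L j 0 ≤ Ts / (1 - Real.exp (-(μ * L))) := by
  have hq0 : 0 < Real.exp (-(μ * L)) := Real.exp_pos _
  have h1q : 0 < 1 - Real.exp (-(μ * L)) := by linarith
  have hDTs : Ts / (1 - Real.exp (-(μ * L))) * (1 - Real.exp (-(μ * L))) = Ts :=
    div_mul_cancel₀ Ts (ne_of_gt h1q)
  set q := Real.exp (-(μ * L)) with hqdef
  set D := Ts / (1 - q) with hDdef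
  have key : ∀ j : ℕ, Hseq Ts μ L j 0 + q ^ (j+1) * D ≤ D := by
    intro j
    induction j with
    | zero =>
        simp only [Hseq]
        rw [mul_zero, neg_zero, Real.exp_zero, one_mul, pow_one]
        nlinarith
    | succ j ih =>
        simp only [Hseq]
        have hexp : Real.exp (-(μ * (0 + ((j:ℝ)+1) * L))) = q ^ (j+1) := by
          rw [hqdef, ← Real.exp_nat_mul]
          congr 1
          push_cast
          ring
        rw [hexp]
        have hqp : (0:ℝ) ≤ q ^ (j+1) := pow_nonneg hq0.le _
        have hstep : q ^ (j+1) * Ts + q ^ (j+2) * D ≤ q ^ (j+1) * D := by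
          have h2 : q ^ (j+2) = q ^ (j+1) * q := by ring
          rw [h2]
          nlinarith
        linarith
  have := key j
  have hp : 0 ≤ q ^ (j+1) * D :=
    mul_nonneg (pow_nonneg hq0.le _) (div_nonneg hTs h1q.le)
  linarith

lemma Hseq_bound_neg {Ts μ L : ℝ} (hTs : 0 ≤ Ts) (hq : Real.exp (μ * L) < 1) (S : ℝ) (j : ℕ) :
    Hseq Ts μ L j (S - ((j:ℝ)+1) * L) ≤ Real.exp (-(μ * (S - L))) * Ts / (1 - Real.exp (μ * L)) := by
  have hq0 : 0 < Real.exp (μ * L) := Real.exp_pos _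
  have h1q : 0 < 1 - Real.exp (μ * L) := by linarith
  have hA0 : 0 ≤ Real.exp (-(μ * (S - L))) * Ts := mul_nonneg (Real.exp_pos _).le hTs
  set q := Real.exp (μ * L) with hqdef
  set A := Real.exp (-(μ * (S - L))) * Ts with hAdef
  induction j with
  | zero =>
      simp only [Hseq]
      have h1 : Real.exp (-(μ * (S - (((0:ℕ):ℝ)+1) * L))) * Ts = A := by
        rw [hAdef]
        norm_num
      rw [h1, le_div_iff₀ h1q]
      nlinarith
  | succ j ih =>
      simp only [Hseq]
      have h1 : Real.exp (-(μ * ((S - (((j+1:ℕ):ℝ)+1) * L) + ((j:ℝ)+1) * L))) * Ts = A := by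
        rw [hAdef]
        congr 2
        push_cast
        ring
      have h2 : Hseq Ts μ L j (S - (((j+1:ℕ):ℝ)+1) * L)
          = q * Hseq Ts μ L j (S - (((j:ℕ):ℝ)+1) * L) := by
        rw [show S - (((j+1:ℕ):ℝ)+1) * L = (S - (((j:ℕ):ℝ)+1) * L) + (-L) by push_cast; ring,
          Hseq_shift]
        rw [hqdef]
        congr 2
        ring
      rw [h1, h2]
      have hih : q * Hseq Ts μ L j (S - (((j:ℕ):ℝ)+1) * L) ≤ q * (A / (1 - q)) :=
        mul_le_mul_of_nonneg_left ih hq0.le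
      have heq : A + q * (A / (1 - q)) = A / (1 - q) := by
        field_simp
        ring
      linarith

/-- The key set membership: `x` lies in the homogeneous ball of log-radius `c`. -/
def Qd {n : ℕ} (Gd : Matrix (Fin n) (Fin n) ℝ) (c : ℝ) (x : Fin n → ℝ) : Prop :=
  ∃ s : ℝ, s ≤ c ∧ euclNorm ((NormedSpace.exp ((-s) • Gd)).mulVec x) < 1

lemma isSol'_shift {n : ℕ} (f : (Fin n → ℝ) → (Fin n → ℝ)) (x : ℝ → Fin n → ℝ)
    (hx : IsSol f x) (a : ℝ) (ha : 0 ≤ a) : IsSol f fun t => x (a + t) := by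
  intro t ht
  have h := hx (a + t) (by linarith)
  have h2 := HasDerivAt.scomp (h := fun t : ℝ => a + t) t h ((hasDerivAt_id t).const_add a)
  simpa [Function.comp_def] using h2

lemma isSol'_scale {n : ℕ} (Gd : Matrix (Fin n) (Fin n) ℝ)
    (f : (Fin n → ℝ) → (Fin n → ℝ)) (μ : ℝ)
    (hhom : ∀ (s : ℝ) (x : Fin n → ℝ),
      f ((NormedSpace.exp (s • Gd)).mulVec x)
        = Real.exp (μ * s) • (NormedSpace.exp (s • Gd)).mulVec (f x))
    (x : ℝ → Fin n → ℝ) (hx : IsSol f x) (σ : ℝ) :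
    IsSol f fun t => (NormedSpace.exp (σ • Gd)).mulVec (x (Real.exp (μ * σ) * t)) := by
  intro t ht
  have hc : (0:ℝ) < Real.exp (μ * σ) := Real.exp_pos _
  have h := hx (Real.exp (μ * σ) * t) (mul_nonneg hc.le ht)
  have h1 : HasDerivAt (fun t : ℝ => x (Real.exp (μ * σ) * t))
      (Real.exp (μ * σ) • f (x (Real.exp (μ * σ) * t))) t := by
    have h2 := HasDerivAt.scomp (h := fun t : ℝ => Real.exp (μ * σ) * t) t h
      ((hasDerivAt_id t).const_mul _)
    simpa [Function.comp_def] using h2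
  have h2 := ((Matrix.mulVecLin
      (NormedSpace.exp (σ • Gd))).toContinuousLinearMap.hasFDerivAt).comp_hasDerivAt t h1
  show HasDerivAt _
    (f ((NormedSpace.exp (σ • Gd)).mulVec (x (Real.exp (μ * σ) * t)))) t
  rw [hhom σ]
  simpa [Function.comp_def] using h2

lemma desc_lemma {n : ℕ} (Gd : Matrix (Fin n) (Fin n) ℝ)
    (f : (Fin n → ℝ) → (Fin n → ℝ)) (μ L Ts : ℝ) (hTs : 0 ≤ Ts)
    (hstep' : ∀ c : ℝ, ∀ x : ℝ → Fin n → ℝ, IsSol f x → Qd Gd (c + L) (x 0) →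
      ∀ t : ℝ, Real.exp (-(μ * c)) * Ts ≤ t → Qd Gd c (x t)) :
    ∀ (j : ℕ) (c : ℝ) (x : ℝ → Fin n → ℝ), IsSol f x →
      Qd Gd (c + ((j:ℝ)+1) * L) (x 0) →
      ∀ t : ℝ, Hseq Ts μ L j c ≤ t → Qd Gd c (x t) := by
  intro j
  induction j with
  | zero =>
      intro c x hx hQ t ht
      have hcast : c + (((0:ℕ):ℝ)+1) * L = c + L := by push_cast; ring
      rw [hcast] at hQ
      refine hstep' c x hx hQ t ?_
      simpa [Hseq] using ht
  | succ j ih =>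
      intro c x hx hQ t ht
      set a := Real.exp (-(μ * (c + ((j:ℝ)+1) * L))) * Ts with ha_def
      have ha : 0 ≤ a := mul_nonneg (Real.exp_pos _).le hTs
      have h1 : Qd Gd (c + ((j:ℝ)+1) * L) (x a) := by
        have hcast : c + (((j+1:ℕ):ℝ)+1) * L = (c + ((j:ℝ)+1) * L) + L := by push_cast; ring
        rw [hcast] at hQ
        exact hstep' (c + ((j:ℝ)+1) * L) x hx hQ a le_rfl
      have hz : IsSol f fun τ => x (a + τ) := isSol'_shift f x hx a ha
      have h2 := ih c (fun τ => x (a + τ)) hz (by simpa using h1) (t - a) ?_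
      · simpa using h2
      · have hH : Hseq Ts μ L (j+1) c
            = Real.exp (-(μ * (c + ((j:ℝ)+1) * L))) * Ts + Hseq Ts μ L j c := rfl
        rw [hH] at ht
        rw [← ha_def] at ht
        linarith

set_option maxHeartbeats 2000000 in
theorem homogeneous_GUAS_implies_finite_or_nearly_fixed_time
    (n : ℕ) (hn : 0 < n)
    (Gd : Matrix (Fin n) (Fin n) ℝ)
    -- Gd is anti-Hurwitz
    (hGd : ∀ z : ℂ, z ∈ spectrum ℂ (Gd.map (algebraMap ℝ ℂ)) → 0 < z.re)
    -- limit property of the dilation d(s) = exp(sGd)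
    (hlimTop : ∀ x : Fin n → ℝ, x ≠ 0 →
      Tendsto (fun s : ℝ => euclNorm ((NormedSpace.exp (s • Gd)).mulVec x))
        atTop atTop)
    (hlimBot : ∀ x : Fin n → ℝ, x ≠ 0 →
      Tendsto (fun s : ℝ => euclNorm ((NormedSpace.exp (s • Gd)).mulVec x))
        atBot (nhds 0))
    (f : (Fin n → ℝ) → (Fin n → ℝ)) (hf : Continuous f)
    (μ : ℝ)
    -- f is d-homogeneous of degree μ
    (hhom : ∀ (s : ℝ) (x : Fin n → ℝ),
      f ((NormedSpace.exp (s • Gd)).mulVec x)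
        = Real.exp (μ * s) • (NormedSpace.exp (s • Gd)).mulVec (f x))
    -- global uniform asymptotic stability: Lyapunov stability ...
    (hstab : ∀ ε > (0 : ℝ), ∃ δ > (0 : ℝ), ∀ x : ℝ → Fin n → ℝ, IsSol f x →
      euclNorm (x 0) < δ → ∀ t, 0 ≤ t → euclNorm (x t) < ε)
    -- ... together with uniform global attractivity
    (hattr : ∀ r > (0 : ℝ), ∀ ε > (0 : ℝ), ∃ T : ℝ, ∀ x : ℝ → Fin n → ℝ, IsSol f x →
      euclNorm (x 0) ≤ r → ∀ t, T ≤ t → euclNorm (x t) < ε) :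
    -- (i) μ < 0 : global uniform finite-time stability
    (μ < 0 →
      (∀ ε > (0 : ℝ), ∃ δ > (0 : ℝ), ∀ x : ℝ → Fin n → ℝ, IsSol f x →
        euclNorm (x 0) < δ → ∀ t, 0 ≤ t → euclNorm (x t) < ε) ∧
      ∃ Tset : (Fin n → ℝ) → ℝ,
        (∀ x₀ : Fin n → ℝ, ∃ ε > (0 : ℝ), ∃ Mb : ℝ,
          ∀ y : Fin n → ℝ, euclNorm (y - x₀) < ε → Tset y ≤ Mb) ∧
        (∀ x : ℝ → Fin n → ℝ, IsSol f x → ∀ t : ℝ, Tset (x 0) ≤ t → x t = 0)) ∧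
    -- (ii) μ > 0 : global uniform nearly fixed-time stability
    (0 < μ →
      (∀ ε > (0 : ℝ), ∃ δ > (0 : ℝ), ∀ x : ℝ → Fin n → ℝ, IsSol f x →
        euclNorm (x 0) < δ → ∀ t, 0 ≤ t → euclNorm (x t) < ε) ∧
      ∀ r > (0 : ℝ), ∃ Tr > (0 : ℝ), ∀ x : ℝ → Fin n → ℝ, IsSol f x →
        ∀ t, Tr ≤ t → euclNorm (x t) < r) := by
  classical
  set L : ℝ := Real.log 2 with hLdef
  have hL : 0 < L := Real.log_pos (by norm_num)
  obtain ⟨M, hM1, hMle⟩ := unif_bound Gd hlimBot L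
  have hM0 : (0:ℝ) < M := lt_of_lt_of_le one_pos hM1
  -- basic facts about Qd
  have Qmono : ∀ {c c' : ℝ} (x : Fin n → ℝ), c ≤ c' → Qd Gd c x → Qd Gd c' x :=
    fun {c c'} x h ⟨s, hs, hl⟩ => ⟨s, hs.trans h, hl⟩
  have Qsmall : ∀ x : Fin n → ℝ, euclNorm x < 1 → Qd Gd 0 x := by
    intro x hx
    refine ⟨0, le_rfl, ?_⟩
    rw [neg_zero, dl_zero, Matrix.one_mulVec]
    exact hx
  have QnormM : ∀ x : Fin n → ℝ, Qd Gd L x → euclNorm x ≤ M := by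
    rintro x ⟨s, hs, hlt⟩
    calc euclNorm x
        = euclNorm ((NormedSpace.exp (s • Gd)).mulVec
            ((NormedSpace.exp ((-s) • Gd)).mulVec x)) := by rw [dl_cancel]
      _ ≤ M * euclNorm ((NormedSpace.exp ((-s) • Gd)).mulVec x) := hMle s hs _
      _ ≤ M * 1 := mul_le_mul_of_nonneg_left hlt.le hM0.le
      _ = M := mul_one M
  have Qshift : ∀ (c σ : ℝ) (x : Fin n → ℝ), Qd Gd c x →
      Qd Gd (c + σ) ((NormedSpace.exp (σ • Gd)).mulVec x) := by
    rintro c σ x ⟨s, hs, hlt⟩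
    refine ⟨s + σ, by linarith, ?_⟩
    rw [dl_comp, show -(s+σ) + σ = -s by ring]
    exact hlt
  have Qzero : ∀ x : Fin n → ℝ, (∀ c : ℝ, Qd Gd c x) → x = 0 := by
    intro x hx
    by_contra hne
    have hev : ∀ᶠ σ : ℝ in atTop,
        (2:ℝ) ≤ euclNorm ((NormedSpace.exp (σ • Gd)).mulVec x) :=
      (hlimTop x hne).eventually_ge_atTop 2
    obtain ⟨b, hb⟩ := eventually_atTop.mp hev
    obtain ⟨s, hs, hlt⟩ := hx (-b)
    have h2 := hb (-s) (by linarith)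
    linarith
  have Qex : ∀ x : Fin n → ℝ, ∃ K : ℕ, Qd Gd ((K:ℝ) * L) x := by
    intro x
    by_cases hne : x = 0
    · refine ⟨0, 0, by simp [hL.le], ?_⟩
      rw [hne, Matrix.mulVec_zero, euclNorm_zero]
      norm_num
    · have hev : ∀ᶠ s : ℝ in atBot,
          euclNorm ((NormedSpace.exp (s • Gd)).mulVec x) < 1 :=
        (hlimBot x hne).eventually_lt_const one_pos
      obtain ⟨b, hb⟩ := eventually_atBot.mp hev
      obtain ⟨K, hK⟩ := exists_nat_ge (-(min b 0) / L)
      refine ⟨K, -(min b 0), ?_, ?_⟩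
      · rw [div_le_iff₀ hL] at hK
        linarith
      · rw [neg_neg]
        exact hb _ (min_le_left b 0)
  -- the one-step contraction lemma
  obtain ⟨Ts, hTs0, hstep⟩ : ∃ Ts : ℝ, 0 ≤ Ts ∧ ∀ x : ℝ → Fin n → ℝ, IsSol f x →
      Qd Gd L (x 0) → ∀ t, Ts ≤ t → Qd Gd 0 (x t) := by
    obtain ⟨T, hT⟩ := hattr M hM0 1 one_pos
    refine ⟨max T 0, le_max_right _ _, fun x hx hQ t ht => ?_⟩
    exact Qsmall _ (hT x hx (QnormM _ hQ) t (le_trans (le_max_left _ _) ht))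
  -- the scaled step lemma
  have hstep' : ∀ c : ℝ, ∀ x : ℝ → Fin n → ℝ, IsSol f x → Qd Gd (c + L) (x 0) →
      ∀ t : ℝ, Real.exp (-(μ * c)) * Ts ≤ t → Qd Gd c (x t) := by
    intro c x hx hQ t ht
    have hysol : IsSol f fun τ =>
        (NormedSpace.exp ((-c) • Gd)).mulVec (x (Real.exp (μ * (-c)) * τ)) :=
      isSol'_scale Gd f μ hhom x hx (-c)
    have hy0 : Qd Gd L ((NormedSpace.exp ((-c) • Gd)).mulVec (x (Real.exp (μ * (-c)) * 0))) := by
      have h1 := Qshift (c + L) (-c) (x 0) hQ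
      rw [show c + L + -c = L by ring] at h1
      rw [mul_zero]
      exact h1
    have hyt := hstep _ hysol hy0 (Real.exp (μ * c) * t) ?_
    · have h4 : Real.exp (μ * (-c)) * (Real.exp (μ * c) * t) = t := by
        rw [← mul_assoc, ← Real.exp_add, show μ * (-c) + μ * c = 0 by ring, Real.exp_zero, one_mul]
      rw [h4] at hyt
      have h5 := Qshift 0 c _ hyt
      rw [zero_add, show (NormedSpace.exp (c • Gd)).mulVec
          ((NormedSpace.exp ((-c) • Gd)).mulVec (x t)) = x t from dl_cancel Gd c (x t)] at h5
      exact h5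
    · have h2 : Real.exp (μ * c) * (Real.exp (-(μ * c)) * Ts) = Ts := by
        rw [← mul_assoc, ← Real.exp_add, show μ * c + -(μ * c) = 0 by ring, Real.exp_zero, one_mul]
      calc Ts = Real.exp (μ * c) * (Real.exp (-(μ * c)) * Ts) := h2.symm
        _ ≤ Real.exp (μ * c) * t := mul_le_mul_of_nonneg_left ht (Real.exp_pos _).le
  have desc := desc_lemma Gd f μ L Ts hTs0 hstep'
  constructor
  · -- part (i): μ < 0
    intro hμ
    refine ⟨hstab, ?_⟩
    have hq : Real.exp (μ * L) < 1 := by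
      rw [Real.exp_lt_one_iff]
      exact mul_neg_of_neg_of_pos hμ hL
    have h1q : (0:ℝ) < 1 - Real.exp (μ * L) := by linarith [Real.exp_pos (μ * L)]
    refine ⟨fun x₀ => Real.exp (-(μ * (((Nat.find (Qex x₀) : ℕ):ℝ) * L - L))) * Ts
        / (1 - Real.exp (μ * L)), ?_, ?_⟩
    · -- local boundedness of the settling time
      intro x₀
      obtain ⟨s, hs, hlt⟩ := Nat.find_spec (Qex x₀)
      set K₀ := Nat.find (Qex x₀) with hK₀
      set A := NormedSpace.exp ((-s) • Gd) with hA
      set CA := ‖Matrix.toEuclideanCLM (𝕜 := ℝ) A‖ with hCA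
      have hCA0 : 0 ≤ CA := norm_nonneg _
      set η := 1 - euclNorm (A.mulVec x₀) with hη
      have hη0 : 0 < η := by simp only [hη]; linarith
      refine ⟨η / (CA + 1), div_pos hη0 (by linarith), Real.exp (-(μ * ((K₀:ℝ) * L - L))) * Ts
        / (1 - Real.exp (μ * L)), fun y hy => ?_⟩
      have hsub : A.mulVec y - A.mulVec x₀ = A.mulVec (y - x₀) := by
        rw [Matrix.mulVec_sub]
      have htri : euclNorm (A.mulVec y) ≤ euclNorm (A.mulVec x₀) + euclNorm (A.mulVec (y - x₀)) := by
        calc euclNorm (A.mulVec y)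
            = euclNorm (A.mulVec x₀ + (A.mulVec y - A.mulVec x₀)) := by ring_nf
          _ ≤ _ := by rw [hsub] at *; exact euclNorm_add_le _ _
      have hCb : euclNorm (A.mulVec (y - x₀)) ≤ CA * euclNorm (y - x₀) := euclNorm_mulVec_le A _
      have hAy : euclNorm (A.mulVec y) < 1 := by
        have h6 : CA * euclNorm (y - x₀) < CA * (η / (CA + 1)) + η / (CA + 1) := by
          have := mul_le_mul_of_nonneg_left hy.le hCA0
          have hp : 0 < η / (CA + 1) := div_pos hη0 (by linarith)
          nlinarith
        have h7 : CA * (η / (CA + 1)) + η / (CA + 1) = η := by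
          field_simp
        nlinarith
      have hQy : Qd Gd ((K₀:ℝ) * L) y := ⟨s, hs, hAy⟩
      have hKy : Nat.find (Qex y) ≤ K₀ := Nat.find_le hQy
      have hmono : Real.exp (-(μ * (((Nat.find (Qex y) : ℕ):ℝ) * L - L)))
          ≤ Real.exp (-(μ * ((K₀:ℝ) * L - L))) := by
        apply Real.exp_le_exp.mpr
        have hc : ((Nat.find (Qex y) : ℕ):ℝ) ≤ (K₀:ℝ) := Nat.cast_le.mpr hKy
        have h8 : ((Nat.find (Qex y) : ℕ):ℝ) * L - L ≤ (K₀:ℝ) * L - L := by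
          have := mul_le_mul_of_nonneg_right hc hL.le
          linarith
        have h9 := mul_le_mul_of_nonpos_left h8 hμ.le
        linarith
      exact (div_le_div_iff_of_pos_right h1q).mpr (mul_le_mul_of_nonneg_right hmono hTs0)
    · -- settling
      intro x hx t ht
      apply Qzero
      intro c
      set K := Nat.find (Qex (x 0)) with hK
      have hKspec : Qd Gd ((K:ℝ) * L) (x 0) := Nat.find_spec (Qex (x 0))
      obtain ⟨j, hj⟩ : ∃ j : ℕ, (K:ℝ) * L - ((j:ℝ)+1) * L ≤ c := by
        obtain ⟨j, hj⟩ := exists_nat_ge (((K:ℝ) * L - c) / L)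
        refine ⟨j, ?_⟩
        rw [div_le_iff₀ hL] at hj
        nlinarith
      refine Qmono _ hj ?_
      refine desc j ((K:ℝ) * L - ((j:ℝ)+1) * L) x hx ?_ t ?_
      · rw [sub_add_cancel]
        exact hKspec
      · exact le_trans (Hseq_bound_neg hTs0 hq ((K:ℝ) * L) j) ht
  · -- part (ii): μ > 0
    intro hμ
    refine ⟨hstab, ?_⟩
    have hq : Real.exp (-(μ * L)) < 1 := by
      rw [Real.exp_lt_one_iff]
      have := mul_pos hμ hL
      linarith
    set Tinf := Ts / (1 - Real.exp (-(μ * L))) with hTinf_def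
    have h1q : (0:ℝ) < 1 - Real.exp (-(μ * L)) := by linarith [Real.exp_pos (-(μ * L))]
    have hTinf0 : 0 ≤ Tinf := div_nonneg hTs0 h1q.le
    have hTinf : ∀ x : ℝ → Fin n → ℝ, IsSol f x → ∀ t, Tinf ≤ t → Qd Gd 0 (x t) := by
      intro x hx t ht
      obtain ⟨K, hK⟩ := Qex (x 0)
      refine desc K 0 x hx (Qmono _ ?_ hK) t (le_trans (Hseq_geom hTs0 hq K) ht)
      rw [zero_add]
      have : ((K:ℝ)) ≤ (K:ℝ) + 1 := by linarith
      nlinarith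
    intro r hr
    obtain ⟨δ, hδ, hδstab⟩ := hstab r hr
    obtain ⟨T₂, hT₂⟩ := hattr M hM0 δ hδ
    set T₂' := max T₂ 0 with hT₂'
    have hT₂'0 : 0 ≤ T₂' := le_max_right _ _
    refine ⟨Tinf + T₂' + 1, by linarith, fun x hx t ht => ?_⟩
    have hz : IsSol f fun τ => x (Tinf + τ) := isSol'_shift f x hx Tinf hTinf0
    have hz0 : euclNorm (x (Tinf + 0)) ≤ M := by
      rw [add_zero]
      exact QnormM _ (Qmono _ hL.le (hTinf x hx Tinf le_rfl))
    have hzt : ∀ τ, T₂' ≤ τ → euclNorm (x (Tinf + τ)) < δ := by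
      intro τ hτ
      exact hT₂ _ hz hz0 τ (le_trans (le_max_left _ _) hτ)
    have hw : IsSol f fun u => x (Tinf + (T₂' + u)) := isSol'_shift f _ hz T₂' hT₂'0
    have hw0 : euclNorm (x (Tinf + (T₂' + 0))) < δ := by
      rw [add_zero]
      exact hzt T₂' le_rfl
    have hfin := hδstab _ hw hw0 (t - (Tinf + T₂')) (by linarith)
    have harg : Tinf + (T₂' + (t - (Tinf + T₂'))) = t := by ring
    rw [← harg]
    exact hfin
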